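/- Let Φ = a(x) y^2 + b(x) y + c(x) be a polynomial in C[x_1,...,x_n, y] with gcd(a, b, c) = 1 and a ≠ 0. Then Φ is reducible in C[x_1,...,x_n, y] if and only if b^2 - 4ac is a square in C[x_1,...,x_n]. -/

import Mathlib

open Polynomial

private lemma quad_key {K : Type*} [Field K] [CharZero K] {A B C' : K} (hA : A ≠ 0) :
    ¬ Irreducible (C A * X ^ 2 + C B * X + C C') ↔ ∃ t : K, B ^ 2 - 4 * A * C' = t ^ 2 := by
  haveI : NeZero (2 : K) := ⟨by norm_num⟩
  set q : K[X] := C A * X ^ 2 + C B * X + C C' with hq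
  have hdeg : q.degree = 2 := degree_quadratic hA
  have hq0 : q ≠ 0 := fun h => by simp [h] at hdeg
  have hnd : q.natDegree = 2 := natDegree_quadratic hA
  constructor
  · intro h
    have hnu : ¬ IsUnit q := by
      intro hu
      rw [isUnit_iff_degree_eq_zero] at hu
      rw [hdeg] at hu
      exact two_ne_zero hu
    rw [irreducible_iff] at h
    push_neg at h
    obtain ⟨u, v, huv, hu, hv⟩ := h hnu
    have hu0 : u ≠ 0 := fun h0 => hq0 (by simp [huv, h0])
    have hv0 : v ≠ 0 := fun h0 => hq0 (by simp [huv, h0])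
    have hsum : u.natDegree + v.natDegree = 2 := by
      rw [← natDegree_mul hu0 hv0, ← huv, hnd]
    have key : ∀ w : K[X], w ≠ 0 → ¬ IsUnit w → w.natDegree ≠ 0 := by
      intro w hw0 hwnu h0
      apply hwnu
      rw [eq_C_of_natDegree_eq_zero h0]
      refine isUnit_C.2 (isUnit_iff_ne_zero.2 fun hc => hw0 ?_)
      rw [eq_C_of_natDegree_eq_zero h0, hc, map_zero]
    have hu1 : u.natDegree = 1 := by
      have h1 := key u hu0 hu
      have h2 := key v hv0 hv
      omega
    -- u has a root
    set x : K := -(u.coeff 0) / (u.coeff 1) with hx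
    have hlc : u.coeff 1 ≠ 0 := by
      have := leadingCoeff_ne_zero.2 hu0
      rwa [leadingCoeff, hu1] at this
    have hurep : u = C (u.coeff 1) * X + C (u.coeff 0) :=
      eq_X_add_C_of_degree_le_one (by rw [degree_eq_natDegree hu0, hu1]; exact le_refl _)
    have hroot : u.eval x = 0 := by
      rw [hurep]
      simp only [eval_add, eval_mul, eval_C, eval_X, hx]
      field_simp
      ring
    have hqroot : q.eval x = 0 := by rw [huv, eval_mul, hroot, zero_mul]
    have heval : A * (x * x) + B * x + C' = 0 := by
      have := hqroot
      simp only [hq, eval_add, eval_mul, eval_pow, eval_C, eval_X] at this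
      linear_combination this
    exact ⟨2 * A * x + B, by
      have := discrim_eq_sq_of_quadratic_eq_zero heval
      rwa [discrim] at this⟩
  · rintro ⟨t, ht⟩ hirr
    set x : K := (-B + t) / (2 * A) with hx
    have hroot : A * (x * x) + B * x + C' = 0 := by
      rw [quadratic_eq_zero_iff hA (by rw [← sq]; exact ht) x]
      left; rfl
    have hqroot : q.IsRoot x := by
      simp only [IsRoot, hq, eval_add, eval_mul, eval_pow, eval_C, eval_X]
      linear_combination hroot
    obtain ⟨v, hv⟩ := (dvd_iff_isRoot).2 hqroot
    have hXx : ¬ IsUnit (X - C x) := not_isUnit_X_sub_C x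
    have hv0 : v ≠ 0 := fun h0 => hq0 (by rw [hv, h0, mul_zero])
    have hvdeg : v.degree = 1 := by
      have := hdeg
      rw [hv, degree_mul, degree_X_sub_C] at this
      have h2 : (2 : WithBot ℕ) = 1 + 1 := by norm_num
      rw [h2] at this
      exact (WithBot.add_left_cancel (by norm_num) this)
    have hvnu : ¬ IsUnit v := by
      intro hu
      rw [isUnit_iff_degree_eq_zero, hvdeg] at hu
      norm_num at hu
    rcases hirr.isUnit_or_isUnit hv with h | h
    · exact hXx h
    · exact hvnu h

theorem stmt_10 (n : ℕ) (a b c : MvPolynomial (Fin n) ℂ) (ha : a ≠ 0)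
    (hgcd : ∀ d : MvPolynomial (Fin n) ℂ, d ∣ a → d ∣ b → d ∣ c → IsUnit d) :
    ¬ Irreducible (C a * X ^ 2 + C b * X + C c) ↔
      ∃ s : MvPolynomial (Fin n) ℂ, b ^ 2 - 4 * a * c = s ^ 2 := by
  classical
  letI : NormalizationMonoid (MvPolynomial (Fin n) ℂ) :=
    UniqueFactorizationMonoid.normalizationMonoid.toNormalizationMonoid
  letI : NormalizedGCDMonoid (MvPolynomial (Fin n) ℂ) :=
    UniqueFactorizationMonoid.toNormalizedGCDMonoid _
  let K := FractionRing (MvPolynomial (Fin n) ℂ)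
  let f : MvPolynomial (Fin n) ℂ →+* K := algebraMap (MvPolynomial (Fin n) ℂ) K
  have hinj : Function.Injective f := IsFractionRing.injective (MvPolynomial (Fin n) ℂ) K
  have hprim : (C a * X ^ 2 + C b * X + C c).IsPrimitive := by
    intro r hr
    rw [C_dvd_iff_dvd_coeff] at hr
    have h2 := hr 2
    have h1 := hr 1
    have h0 := hr 0
    simp only [coeff_add, coeff_C_mul, coeff_X_pow, coeff_X, coeff_C] at h2 h1 h0
    norm_num at h2 h1 h0
    exact hgcd r h2 h1 h0
  rw [hprim.irreducible_iff_irreducible_map_fraction_map (K := K)]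
  have hmap : (C a * X ^ 2 + C b * X + C c).map f = C (f a) * X ^ 2 + C (f b) * X + C (f c) := by
    simp
  rw [hmap]
  have hfa : f a ≠ 0 := fun h => ha (hinj (by rwa [map_zero]))
  rw [quad_key hfa]
  constructor
  · rintro ⟨t, ht⟩
    have hd : f (b ^ 2 - 4 * a * c) = t ^ 2 := by
      rw [← ht]
      simp only [map_sub, map_pow, map_mul, map_ofNat]
    have hint : IsIntegral (MvPolynomial (Fin n) ℂ) t := by
      refine ⟨X ^ 2 - C (b ^ 2 - 4 * a * c), monic_X_pow_sub_C _ (by norm_num), ?_⟩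
      simp only [eval₂_sub, eval₂_pow, eval₂_X, eval₂_C]
      show t ^ 2 - f (b ^ 2 - 4 * a * c) = 0
      rw [hd, sub_self]
    obtain ⟨s, hs⟩ := IsIntegrallyClosed.isIntegral_iff.mp hint
    have hs' : f s = t := hs
    refine ⟨s, hinj ?_⟩
    rw [map_pow, hs']
    exact hd
  · rintro ⟨s, hs⟩
    refine ⟨f s, ?_⟩
    have hthis : f (b ^ 2 - 4 * a * c) = f (s ^ 2) := congrArg f hs
    simp only [map_sub, map_pow, map_mul, map_ofNat] at hthis
    linear_combination hthis
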